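/- arXiv:2409.00436 — 3 statements merged into one kernel-verified Lean document; each statement's English description precedes it below -/
import Mathlib

section
/- If 𝔏 is a diagonalizable Lindblad generator with eigenvalues λ₀=0, λ₁,…,λ_{d²−1} and relaxation rates Γ_ℓ = −Re λ_ℓ, then Σ_{ℓ=1}^{d²−1} Γ_ℓ = d Σ_{ℓ=1}^{d²−1} γ_ℓ, where γ_ℓ are the canonical rates with orthonormal traceless jump operators. -/
open Matrix Finset

lemma stdBasis_repr_apply' {d : ℕ} (M : Matrix (Fin d) (Fin d) ℂ) (i j : Fin d) :
    (Matrix.stdBasis ℂ (Fin d) (Fin d)).repr M (i, j) = M i j := by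
  nth_rewrite 1 [matrix_eq_sum_single M]
  have h : ∀ a b : Fin d, Matrix.single a b (M a b)
      = M a b • (Matrix.stdBasis ℂ (Fin d) (Fin d)) (a, b) := by
    intro a b
    rw [Matrix.stdBasis_eq_single, Matrix.smul_single, smul_eq_mul, mul_one]
  simp only [h, map_sum, _root_.map_smul, Module.Basis.repr_self, Finsupp.smul_single, smul_eq_mul,
    mul_one, Finsupp.coe_finset_sum, Finset.sum_apply, Finsupp.single_apply, Prod.mk.injEq]
  simp [ite_and, Finset.sum_ite_eq, Finset.sum_ite_eq']

/-- If `𝔏` is a diagonalizable Lindblad generator (there is a basis of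
eigenvectors) with eigenvalues `μ ℓ`, `μ 0 = 0`, relaxation rates
`Γ ℓ = -Re (μ ℓ)`, and canonical rates `γ` with orthonormal traceless jump
operators, then `∑ ℓ Γ ℓ = d ∑ n γ n`. -/
theorem sum_relaxation_rates {d : ℕ} (hd : 0 < d)
    (H : Matrix (Fin d) (Fin d) ℂ) (hH : H.IsHermitian)
    (γ : Fin (d ^ 2 - 1) → ℝ)
    (L : Fin (d ^ 2 - 1) → Matrix (Fin d) (Fin d) ℂ)
    (horth : ∀ k l, ((L k)ᴴ * L l).trace = if k = l then 1 else 0)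
    (htr : ∀ k, (L k).trace = 0)
    (𝔏 : Matrix (Fin d) (Fin d) ℂ →ₗ[ℂ] Matrix (Fin d) (Fin d) ℂ)
    (h𝔏 : ∀ ρ, 𝔏 ρ = -(Complex.I • (H * ρ - ρ * H)) +
      ∑ n, (γ n : ℂ) • (L n * ρ * (L n)ᴴ -
        (1 / 2 : ℂ) • ((L n)ᴴ * (L n) * ρ + ρ * ((L n)ᴴ * (L n)))))
    (μ : Fin (d ^ 2) → ℂ)
    (b : Module.Basis (Fin (d ^ 2)) ℂ (Matrix (Fin d) (Fin d) ℂ))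
    (heig : ∀ ℓ, 𝔏 (b ℓ) = μ ℓ • b ℓ)
    (hμ0 : μ ⟨0, by positivity⟩ = 0) :
    ∑ ℓ, (-(μ ℓ).re) = d * ∑ n, γ n := by
  set B := Matrix.stdBasis ℂ (Fin d) (Fin d) with hB
  have t1 : LinearMap.trace ℂ _ 𝔏 = ∑ ℓ, μ ℓ := by
    rw [LinearMap.trace_eq_matrix_trace ℂ b]
    unfold Matrix.trace
    simp [Matrix.diag, LinearMap.toMatrix_apply, heig]
  have t2 : LinearMap.trace ℂ _ 𝔏 = -(d : ℂ) * ∑ n, (γ n : ℂ) := by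
    rw [LinearMap.trace_eq_matrix_trace ℂ B]
    unfold Matrix.trace
    have key : ∀ p : Fin d × Fin d, (LinearMap.toMatrix B B 𝔏) p p =
        -(Complex.I * (H p.1 p.1 - H p.2 p.2)) +
        ∑ n, (γ n : ℂ) * ((L n) p.1 p.1 * ((L n)ᴴ) p.2 p.2 -
          (1/2 : ℂ) * (((L n)ᴴ * L n) p.1 p.1 + ((L n)ᴴ * L n) p.2 p.2)) := by
      rintro ⟨i, j⟩
      rw [LinearMap.toMatrix_apply, hB, stdBasis_repr_apply', h𝔏,
        Matrix.stdBasis_eq_single]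
      simp only [Matrix.add_apply, Matrix.neg_apply, Matrix.smul_apply, Matrix.sub_apply,
        Matrix.sum_apply, smul_eq_mul]
      congr 1
      · simp
      · refine Finset.sum_congr rfl fun n _ => ?_
        have e1 : (L n * Matrix.single i j (1:ℂ) * (L n)ᴴ) i j
            = L n i i * (L n)ᴴ j j := by
          rw [Matrix.mul_apply, Finset.sum_eq_single j (fun k _ hk => by simp [hk]) (by simp)]
          simp
        rw [e1]
        simp
    simp only [Matrix.diag, key]
    rw [Finset.sum_add_distrib]
    have h0 : ∑ i : Fin d, ∑ j : Fin d, (H i i - H j j) = 0 := by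
      simp only [Finset.sum_sub_distrib]
      rw [sub_eq_zero, Finset.sum_comm]
    have hham : ∑ p : Fin d × Fin d, -(Complex.I * (H p.1 p.1 - H p.2 p.2)) = 0 := by
      rw [Fintype.sum_prod_type]
      simp only [Finset.sum_neg_distrib, ← Finset.mul_sum]
      rw [h0, mul_zero, neg_zero]
    rw [hham, zero_add, Finset.sum_comm]
    have per : ∀ n, ∑ p : Fin d × Fin d, (γ n : ℂ) *
        ((L n) p.1 p.1 * ((L n)ᴴ) p.2 p.2 -
          (1/2 : ℂ) * (((L n)ᴴ * L n) p.1 p.1 + ((L n)ᴴ * L n) p.2 p.2)) =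
        -(d : ℂ) * (γ n : ℂ) := by
      intro n
      have htrL : ∑ i : Fin d, L n i i = 0 := htr n
      have htrLH : ∑ j : Fin d, ((L n)ᴴ) j j = 0 := by
        have : ∑ j : Fin d, ((L n)ᴴ) j j = star (∑ i : Fin d, L n i i) := by
          simp [Matrix.conjTranspose_apply, star_sum]
        rw [this, htrL, star_zero]
      have htrLL : ∑ i : Fin d, ((L n)ᴴ * L n) i i = 1 := by
        have := horth n n
        simpa [Matrix.trace, Matrix.diag] using this
      rw [Fintype.sum_prod_type]
      have inner : ∀ i : Fin d, ∑ j : Fin d, (γ n : ℂ) *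
          ((L n) i i * ((L n)ᴴ) j j -
            (1/2 : ℂ) * (((L n)ᴴ * L n) i i + ((L n)ᴴ * L n) j j)) =
          (γ n : ℂ) * ((L n) i i * 0 -
            (1/2 : ℂ) * ((d : ℂ) * ((L n)ᴴ * L n) i i + 1)) := by
        intro i
        rw [← Finset.mul_sum]
        congr 1
        rw [Finset.sum_sub_distrib, ← Finset.mul_sum, htrLH, ← Finset.mul_sum,
          Finset.sum_add_distrib, Finset.sum_const, htrLL, Finset.card_univ,
          Fintype.card_fin, nsmul_eq_mul]
      simp only [inner]
      have hc : ∑ _x : Fin d, ((d : ℂ) * ((L n)ᴴ * L n) _x _x + 1) = (d : ℂ) + d := by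
        rw [Finset.sum_add_distrib, ← Finset.mul_sum, htrLL, mul_one, Finset.sum_const,
          Finset.card_univ, Fintype.card_fin, nsmul_eq_mul, mul_one]
      simp only [mul_zero, zero_sub, mul_neg, Finset.sum_neg_distrib, ← Finset.mul_sum]
      rw [hc]
      ring
    simp only [per]
    rw [← Finset.mul_sum]
  have hsum : ∑ ℓ, μ ℓ = -(d : ℂ) * ∑ n, (γ n : ℂ) := t1.symm.trans t2
  have hre : (∑ ℓ, μ ℓ).re = -(d : ℝ) * ∑ n, γ n := by
    rw [hsum]
    push_cast
    simp
  have hneg : ∑ ℓ, (-(μ ℓ).re) = -(∑ ℓ, (μ ℓ).re) := Finset.sum_neg_distrib _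
  rw [hneg, ← Complex.re_sum, hre]
  ring
end

section
/- If {f_r}_{r=1}^d is an orthonormal basis of ℂ^d and L ∈ M_d(ℂ) is expressed in an orthonormal basis of traceless matrices via a unitary change of basis with coefficients U_{n,ℓ} (row n a unit vector), then for each i, the quantity w_i = Σ_{j≠i} (|⟨f_j, L f_i⟩|² + |⟨f_j, L† f_i⟩|²) satisfies w_i ≤ Σ_ℓ |U_{n,ℓ}|² = 1. -/
open Matrix Finset

/-- If `L ∈ M_d(ℂ)` is traceless with `Tr(L†L) = 1`, then for every orthonormal
basis `{f 1, …, f d}` of `ℂ^d` and every index `i`,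
`∑_{j ≠ i} (|⟨f j, L (f i)⟩|² + |⟨f j, L† (f i)⟩|²) ≤ 1`. -/

theorem jump_operator_weight_le_one {d : ℕ} (L : Matrix (Fin d) (Fin d) ℂ)
    (htr : L.trace = 0) (hnorm : (Lᴴ * L).trace = 1)
    (f : Fin d → (Fin d → ℂ))
    (horth : ∀ j k, star (f j) ⬝ᵥ f k = if j = k then 1 else 0)
    (i : Fin d) :
    ∑ j ∈ Finset.univ.filter (· ≠ i),
        (‖star (f j) ⬝ᵥ L.mulVec (f i)‖ ^ 2 +
          ‖star (f j) ⬝ᵥ Lᴴ.mulVec (f i)‖ ^ 2) ≤ 1 := by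
  classical
  set F : Matrix (Fin d) (Fin d) ℂ := Matrix.of fun a k => f k a with hF
  have hFunit : Fᴴ * F = 1 := by
    ext j k
    simpa [Matrix.mul_apply, Matrix.conjTranspose_apply, Matrix.one_apply, dotProduct, F] using
      horth j k
  have hFunit' : F * Fᴴ = 1 := mul_eq_one_comm.mp hFunit
  have key : ∀ (A : Matrix (Fin d) (Fin d) ℂ) (j k : Fin d),
      (Fᴴ * A * F) j k = star (f j) ⬝ᵥ A.mulVec (f k) := by
    intro A j k
    simp only [Matrix.mul_apply, Matrix.conjTranspose_apply, dotProduct, Matrix.mulVec,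
      Finset.sum_mul, Finset.mul_sum, F, Matrix.of_apply, Pi.star_apply]
    rw [Finset.sum_comm]
    apply Finset.sum_congr rfl
    intro a _
    apply Finset.sum_congr rfl
    intro b _
    ring
  set M : Matrix (Fin d) (Fin d) ℂ := Fᴴ * L * F with hM
  have hMd : ∀ j, M j i = star (f j) ⬝ᵥ L.mulVec (f i) := fun j => key L j i
  have hMad : ∀ j, star (f j) ⬝ᵥ Lᴴ.mulVec (f i) = (starRingEnd ℂ) (M i j) := by
    intro j
    have h1 : (Fᴴ * Lᴴ * F) j i = star (f j) ⬝ᵥ Lᴴ.mulVec (f i) := key Lᴴ j i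
    have h2 : Fᴴ * Lᴴ * F = Mᴴ := by
      simp [hM, Matrix.conjTranspose_mul, Matrix.mul_assoc]
    rw [← h1, h2, Matrix.conjTranspose_apply]
    rfl
  -- total Frobenius norm of M is 1
  have hMM : (Mᴴ * M).trace = 1 := by
    have hMM' : Mᴴ * M = Fᴴ * (Lᴴ * (L * F)) := by
      simp only [hM, Matrix.conjTranspose_mul, Matrix.conjTranspose_conjTranspose,
        Matrix.mul_assoc]
      rw [show F * (Fᴴ * (L * F)) = L * F from by
        rw [← Matrix.mul_assoc, hFunit', Matrix.one_mul]]
    rw [hMM', Matrix.trace_mul_comm]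
    simp only [Matrix.mul_assoc]
    rw [hFunit', Matrix.mul_one]
    exact hnorm
  have htot : ∑ k : Fin d, ∑ j : Fin d, ‖M j k‖ ^ 2 = 1 := by
    have : (Mᴴ * M).trace = ((∑ k : Fin d, ∑ j : Fin d, ‖M j k‖ ^ 2 : ℝ) : ℂ) := by
      simp only [Matrix.trace, Matrix.diag_apply, Matrix.mul_apply, Matrix.conjTranspose_apply]
      push_cast
      apply Finset.sum_congr rfl
      intro k _
      apply Finset.sum_congr rfl
      intro j _
      rw [← Complex.ofReal_pow, Complex.sq_norm, Complex.normSq_eq_conj_mul_self]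
      rfl
    rw [hMM] at this
    exact_mod_cast this.symm
  -- rewrite the goal in terms of M
  have hrw : ∑ j ∈ Finset.univ.filter (· ≠ i),
        (‖star (f j) ⬝ᵥ L.mulVec (f i)‖ ^ 2 +
          ‖star (f j) ⬝ᵥ Lᴴ.mulVec (f i)‖ ^ 2)
      = ∑ j ∈ Finset.univ.filter (· ≠ i),
        (‖M j i‖ ^ 2 + ‖M i j‖ ^ 2) := by
    apply Finset.sum_congr rfl
    intro j _
    rw [← hMd j, hMad j, Complex.norm_conj]
  rw [hrw, ← htot]
  rw [Finset.sum_add_distrib]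
  have h1 : ∑ j ∈ Finset.univ.filter (· ≠ i), ‖M j i‖ ^ 2
      ≤ ∑ j : Fin d, ‖M j i‖ ^ 2 :=
    Finset.sum_le_sum_of_subset_of_nonneg (Finset.filter_subset _ _)
      (fun _ _ _ => by positivity)
  have h2 : ∑ j ∈ Finset.univ.filter (· ≠ i), ‖M i j‖ ^ 2
      ≤ ∑ k ∈ Finset.univ.filter (· ≠ i), ∑ j : Fin d, ‖M j k‖ ^ 2 := by
    apply Finset.sum_le_sum
    intro k _
    exact Finset.single_le_sum (f := fun j => ‖M j k‖ ^ 2)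
      (fun j _ => by positivity) (Finset.mem_univ i)
  have hsplit : ∑ k : Fin d, ∑ j : Fin d, ‖M j k‖ ^ 2
      = (∑ j : Fin d, ‖M j i‖ ^ 2)
        + ∑ k ∈ Finset.univ.filter (· ≠ i), ∑ j : Fin d, ‖M j k‖ ^ 2 := by
    rw [Finset.filter_ne', ← Finset.add_sum_erase _ _ (Finset.mem_univ i)]
  rw [hsplit]
  exact add_le_add h1 h2
end

section
/- Let 𝔏 be a Lindblad generator in canonical form with nonnegative rates γ_n and orthonormal traceless jump operators L_n, and let {ψ_i} be any orthonormal basis of ℂ^d. Define W_{ij} = R_{ij} − δ_{ij} Σ_k R_{kj} with R_{ij} = Σ_n γ_n |⟨ψ_i, L_n ψ_j⟩|². Then the row-sum norm satisfies ‖W‖_∞ = max_i Σ_j |W_{ij}| ≤ Σ_n γ_n. -/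
open Matrix Finset

/-- Row-sum norm bound for the Teich–Mahler rate matrix: with nonnegative
canonical rates `γ`, orthonormal traceless jump operators `L n`, any
orthonormal basis `ψ` of `ℂ^d`, `R i j = ∑ n γ n |⟨ψ i, L n (ψ j)⟩|²` and
`W i j = R i j - δ_{ij} ∑ k R k j`, one has
`‖W‖_∞ = max_i ∑ j |W i j| ≤ ∑ n γ n`. -/
theorem rate_matrix_row_sum_bound {d : ℕ}
    (γ : Fin (d ^ 2 - 1) → ℝ) (hγ : ∀ n, 0 ≤ γ n)
    (L : Fin (d ^ 2 - 1) → Matrix (Fin d) (Fin d) ℂ)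
    (horth : ∀ k l, ((L k)ᴴ * L l).trace = if k = l then 1 else 0)
    (htr : ∀ k, (L k).trace = 0)
    (ψ : Fin d → (Fin d → ℂ))
    (hψ : ∀ i j, star (ψ i) ⬝ᵥ ψ j = if i = j then 1 else 0)
    (R W : Matrix (Fin d) (Fin d) ℝ)
    (hR : ∀ i j, R i j = ∑ n, γ n * (‖star (ψ i) ⬝ᵥ (L n).mulVec (ψ j)‖) ^ 2)
    (hW : ∀ i j, W i j = R i j - (if i = j then ∑ k, R k j else 0)) :
    ∀ i, ∑ j, |W i j| ≤ ∑ n, γ n := by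
  intro i
  -- the unitary with columns ψ
  set U : Matrix (Fin d) (Fin d) ℂ := Matrix.of (fun a j => ψ j a) with hUdef
  have hUU : Uᴴ * U = 1 := by
    ext a b
    simpa [Matrix.mul_apply, Matrix.conjTranspose_apply, dotProduct, hUdef,
      Matrix.one_apply] using hψ a b
  have hUU' : U * Uᴴ = 1 := mul_eq_one_comm.mp hUU
  -- matrix of L n in the basis ψ
  set M : Fin (d ^ 2 - 1) → Matrix (Fin d) (Fin d) ℂ :=
    fun n => Uᴴ * L n * U with hMdef
  have hMentry : ∀ n a b,
      star (ψ a) ⬝ᵥ (L n).mulVec (ψ b) = M n a b := by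
    intro n a b
    simp only [hMdef, Matrix.mul_apply, Matrix.conjTranspose_apply, hUdef,
      Matrix.of_apply, dotProduct, Matrix.mulVec, Pi.star_apply, Finset.mul_sum,
      Finset.sum_mul]
    rw [Finset.sum_comm]
    apply Finset.sum_congr rfl; intro c _
    apply Finset.sum_congr rfl; intro e _
    ring
  -- total squared Frobenius mass of M n is 1
  have hkey : ∀ n, ∑ a, ∑ b, (‖M n a b‖) ^ 2 = 1 := by
    intro n
    have htrM : ((M n)ᴴ * M n).trace = 1 := by
      have : (M n)ᴴ * M n = Uᴴ * ((L n)ᴴ * L n) * U := by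
        simp only [hMdef, Matrix.conjTranspose_mul, Matrix.conjTranspose_conjTranspose,
          Matrix.mul_assoc]
        rw [← Matrix.mul_assoc U Uᴴ, hUU', Matrix.one_mul]
      rw [this, Matrix.trace_mul_cycle, ← Matrix.mul_assoc, hUU', Matrix.one_mul]
      simpa using horth n n
    have hre : (((M n)ᴴ * M n).trace).re = 1 := by rw [htrM]; simp
    have hexp : (((M n)ᴴ * M n).trace).re = ∑ a, ∑ b, (‖M n a b‖) ^ 2 := by
      simp only [Matrix.trace, Matrix.diag, Matrix.mul_apply,
        Matrix.conjTranspose_apply]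
      rw [Finset.sum_comm]
      rw [Complex.re_sum]
      apply Finset.sum_congr rfl; intro a _
      rw [Complex.re_sum]
      apply Finset.sum_congr rfl; intro b _
      rw [Complex.sq_norm]
      simp [Complex.normSq_apply, Complex.mul_re]
    rw [← hre, hexp]
  -- nonnegativity of R entries
  have hRnn : ∀ a b, 0 ≤ R a b := by
    intro a b
    rw [hR]
    apply Finset.sum_nonneg
    intro n _
    exact mul_nonneg (hγ n) (sq_nonneg _)
  -- diagonal term
  have hdiag : |W i i| = ∑ k ∈ univ \ {i}, R k i := by
    have h1 : W i i = R i i - ∑ k, R k i := by rw [hW]; simp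
    have h2 : ∑ k, R k i = R i i + ∑ k ∈ univ \ {i}, R k i := by
      rw [Finset.sum_eq_sum_sdiff_singleton_add (Finset.mem_univ i) (fun k => R k i)]
      ring
    rw [h1, h2, abs_of_nonpos (by
      have := Finset.sum_nonneg (fun k (_ : k ∈ univ \ {i}) => hRnn k i)
      linarith)]
    ring
  -- off-diagonal terms
  have hoff : ∀ j, j ≠ i → |W i j| = R i j := by
    intro j hj
    rw [hW, if_neg (by exact fun h => hj h.symm)]
    simp [abs_of_nonneg (hRnn i j)]
  -- split the row sum
  have hsplit : ∑ j, |W i j| = (∑ j ∈ univ \ {i}, R i j) + ∑ k ∈ univ \ {i}, R k i := by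
    rw [Finset.sum_eq_sum_sdiff_singleton_add (Finset.mem_univ i) (fun j => |W i j|)]
    rw [hdiag]
    congr 1
    apply Finset.sum_congr rfl
    intro j hj
    exact hoff j (by simpa using (Finset.mem_sdiff.mp hj).2)
  rw [hsplit]
  -- express via M and swap sums
  have hRrw : ∀ a b, R a b = ∑ n, γ n * (‖M n a b‖) ^ 2 := by
    intro a b; rw [hR]
    exact Finset.sum_congr rfl fun n _ => by rw [hMentry]
  have hswap : (∑ j ∈ univ \ {i}, R i j) + ∑ k ∈ univ \ {i}, R k i
      = ∑ n, γ n * ((∑ j ∈ univ \ {i}, (‖M n i j‖) ^ 2)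
          + ∑ k ∈ univ \ {i}, (‖M n k i‖) ^ 2) := by
    simp only [hRrw, mul_add, Finset.mul_sum, Finset.sum_add_distrib]
    congr 1
    · exact Finset.sum_comm
    · exact Finset.sum_comm
  rw [hswap]
  apply Finset.sum_le_sum
  intro n _
  have hbound : (∑ j ∈ univ \ {i}, (‖M n i j‖) ^ 2)
      + ∑ k ∈ univ \ {i}, (‖M n k i‖) ^ 2 ≤ 1 := by
    rw [← hkey n]
    rw [Finset.sum_eq_sum_sdiff_singleton_add (Finset.mem_univ i)
      (fun a => ∑ b, (‖M n a b‖) ^ 2)]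
    have h1 : ∑ j ∈ univ \ {i}, (‖M n i j‖) ^ 2
        ≤ ∑ b, (‖M n i b‖) ^ 2 :=
      Finset.sum_le_sum_of_subset_of_nonneg (Finset.sdiff_subset)
        (fun b _ _ => sq_nonneg _)
    have h2 : ∑ k ∈ univ \ {i}, (‖M n k i‖) ^ 2
        ≤ ∑ k ∈ univ \ {i}, ∑ b, (‖M n k b‖) ^ 2 :=
      Finset.sum_le_sum (fun k _ =>
        Finset.single_le_sum (f := fun b => ‖M n k b‖ ^ 2)
          (fun b _ => sq_nonneg _) (Finset.mem_univ i))
    linarith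
  calc γ n * _ ≤ γ n * 1 := mul_le_mul_of_nonneg_left hbound (hγ n)
    _ = γ n := mul_one _
end
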